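/- TSP implies SMR (from the hierarchy in Theorem 16): If a set C of CI relations on [p] satisfies the TSP assumption with respect to a DAG G, then C satisfies the SMR assumption with respect to G; that is, CI(G) ⊆ C and |G| < |H| for every DAG H on [p] with CI(H) ⊆ C that is not Markov equivalent to G. -/

import Mathlib

open scoped Classical

namespace GSP

/-- A DAG on the node set `Fin p`, given by its finite set of arrows,
which must form an acyclic relation. -/
structure DAG (p : ℕ) where
  arrows : Finset (Fin p × Fin p)
  acyclic : ∀ i : Fin p, ¬ Relation.TransGen (fun a b => (a, b) ∈ arrows) i i

variable {p : ℕ}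

namespace DAG

/-- `a → b` is an arrow of `G`. -/
def Arrow (G : DAG p) (a b : Fin p) : Prop := (a, b) ∈ G.arrows

/-- The number of arrows of `G`, denoted `|G|`. -/
def numArrows (G : DAG p) : ℕ := G.arrows.card

/-- The set of parents of a node `j` in `G`. -/
noncomputable def parents (G : DAG p) (j : Fin p) : Finset (Fin p) :=
  Finset.univ.filter fun i => G.Arrow i j

/-- Adjacency: `a` and `b` are joined by an arrow in some direction. -/
def Adj (G : DAG p) (a b : Fin p) : Prop := G.Arrow a b ∨ G.Arrow b a

/-- `b` is a collider between `a` and `c`: both arrows point into `b`. -/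
def Collider (G : DAG p) (a b c : Fin p) : Prop := G.Arrow a b ∧ G.Arrow c b

/-- `d` is a (reflexive) descendant of `a` in `G`. -/
def Desc (G : DAG p) (a d : Fin p) : Prop := Relation.ReflTransGen G.Arrow a d

/-- The list of nodes `l` is a d-connecting walk given `S`: consecutive nodes
are adjacent, every internal collider lies in `S` or has a descendant in `S`,
and no internal non-collider lies in `S`. -/
def DConnWalk (G : DAG p) (S : Finset (Fin p)) (l : List (Fin p)) : Prop :=
  l.Chain' G.Adj ∧
  ∀ (m : ℕ) (_ : 1 ≤ m) (h2 : m + 1 < l.length),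
    (G.Collider (l.get ⟨m - 1, by omega⟩) (l.get ⟨m, by omega⟩) (l.get ⟨m + 1, h2⟩) →
      ∃ d ∈ S, G.Desc (l.get ⟨m, by omega⟩) d) ∧
    (¬ G.Collider (l.get ⟨m - 1, by omega⟩) (l.get ⟨m, by omega⟩) (l.get ⟨m + 1, h2⟩) →
      l.get ⟨m, by omega⟩ ∉ S)

/-- `i` and `j` are d-connected given `S` in `G`. -/
def DConn (G : DAG p) (i j : Fin p) (S : Finset (Fin p)) : Prop :=
  ∃ l : List (Fin p), l.head? = some i ∧ l.getLast? = some j ∧ G.DConnWalk S l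

/-- `i` and `j` are d-separated given `S` in `G`. -/
def DSep (G : DAG p) (i j : Fin p) (S : Finset (Fin p)) : Prop := ¬ G.DConn i j S

end DAG

/-- A conditional independence (CI) relation `i ⊥ j | S` on `[p]`. -/
abbrev CIRel (p : ℕ) := Fin p × Fin p × Finset (Fin p)

/-- The set of CI relations encoded by the d-separations of `G`. -/
def CIof (G : DAG p) : Set (CIRel p) :=
  {t | t.1 ≠ t.2.1 ∧ t.1 ∉ t.2.2 ∧ t.2.1 ∉ t.2.2 ∧ G.DSep t.1 t.2.1 t.2.2}

/-- The symmetric closure of a set of CI relations. -/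
def symClosure (C : Set (CIRel p)) : Set (CIRel p) :=
  {t | t ∈ C ∨ (t.2.1, t.1, t.2.2) ∈ C}

/-- Symmetry of a set of CI relations. -/
def SymmetricCI (C : Set (CIRel p)) : Prop :=
  ∀ i j S, (i, j, S) ∈ C → (j, i, S) ∈ C

/-- A semigraphoid: symmetric and satisfying (SG2). -/
def Semigraphoid (C : Set (CIRel p)) : Prop :=
  SymmetricCI C ∧
  ∀ i j k S, (i, j, S) ∈ C → (i, k, insert j S) ∈ C →
    (i, k, S) ∈ C ∧ (i, j, insert k S) ∈ C

/-- A graphoid: a semigraphoid additionally satisfying intersection (INT). -/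
def Graphoid (C : Set (CIRel p)) : Prop :=
  Semigraphoid C ∧
  ∀ i j k S, (i, j, insert k S) ∈ C → (i, k, insert j S) ∈ C →
    (i, j, S) ∈ C ∧ (i, k, S) ∈ C

/-- Build a DAG from a relation compatible with a numeric ordering. -/
noncomputable def mkDAG (R : Fin p → Fin p → Prop) (f : Fin p → ℕ)
    (hf : ∀ a b, R a b → f a < f b) : DAG p where
  arrows := Finset.univ.filter fun e : Fin p × Fin p => R e.1 e.2
  acyclic := by
    intro i hi
    have key : ∀ a b : Fin p,
        Relation.TransGen (fun a b : Fin p =>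
          (a, b) ∈ Finset.univ.filter fun e : Fin p × Fin p => R e.1 e.2) a b →
        f a < f b := by
      intro a b h
      induction h with
      | single h => exact hf _ _ (by simpa using h)
      | tail _ h ih => exact lt_trans ih (hf _ _ (by simpa using h))
    exact lt_irrefl _ (key i i hi)

/-- The conditioning set `{π_1, …, π_j} \ {π_i, π_j}` (where `b = π_j` is the
later node and `a = π_i` the earlier one) used in the definition of minimal
I-MAPs. -/
noncomputable def condSet (π : Equiv.Perm (Fin p)) (a b : Fin p) : Finset (Fin p) :=
  ((Finset.univ.filter fun k : Fin p => π.symm k ≤ π.symm b).erase a).erase b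

/-- The minimal I-MAP `G_π` of a set `C` of CI relations with respect to the
permutation (ordering) `π`: there is an arrow `π_i → π_j` for positions `i < j`
iff `π_i ⊥ π_j | {π_1, …, π_j} \ {π_i, π_j}` is not in `C`. -/
noncomputable def minimalIMAP (C : Set (CIRel p)) (π : Equiv.Perm (Fin p)) : DAG p :=
  mkDAG (fun a b => π.symm a < π.symm b ∧ (a, b, condSet π a b) ∉ C)
    (fun a => (π.symm a : ℕ)) (fun a b h => by exact_mod_cast h.1)

/-- Markov equivalence of DAGs: equal sets of d-separation statements. -/
def MarkovEquiv (G H : DAG p) : Prop := CIof G = CIof H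

/-- `H` is an independence map of `G`, written `G ≤ H`: `CI(H) ⊆ CI(G)`. -/
def IMapLE (G H : DAG p) : Prop := CIof H ⊆ CIof G

/-- `π` is a linear extension of `G`: every arrow goes from an earlier to a
later element of `π`. -/
def IsLinExt (G : DAG p) (π : Equiv.Perm (Fin p)) : Prop :=
  ∀ a b, G.Arrow a b → π.symm a < π.symm b

/-- `a → b` is a covered arrow of `G`: `pa(a) = pa(b) \ {a}`. -/
def DAG.Covered (G : DAG p) (a b : Fin p) : Prop :=
  G.Arrow a b ∧ G.parents a = (G.parents b).erase a

/-- The minimal I-MAPs `G_σ` and `G_ρ` are connected by a covered arrow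
reversal: `ρ` is a linear extension of the DAG obtained from `G_σ` by
reversing one covered arrow of `G_σ`. -/
def CoveredReversalStep (C : Set (CIRel p)) (σ ρ : Equiv.Perm (Fin p)) : Prop :=
  ∃ a b : Fin p, (minimalIMAP C σ).Covered a b ∧
    ρ.symm b < ρ.symm a ∧
    ∀ x y : Fin p, (minimalIMAP C σ).Arrow x y → (x, y) ≠ (a, b) →
      ρ.symm x < ρ.symm y

/-- A weakly decreasing sequence of covered arrow reversals: a sequence of
minimal I-MAPs in which consecutive members are connected by covered arrow
reversals and the number of arrows never increases. -/
def WeaklyDecreasingSeq (C : Set (CIRel p)) (s : List (Equiv.Perm (Fin p))) : Prop :=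
  s.Chain' fun σ ρ => CoveredReversalStep C σ ρ ∧
    (minimalIMAP C ρ).numArrows ≤ (minimalIMAP C σ).numArrows

/-- Some weakly decreasing sequence of covered arrow reversals starting at
`G_π` reaches a minimal I-MAP with strictly fewer arrows. -/
def EscapesByCoveredReversals (C : Set (CIRel p)) (π : Equiv.Perm (Fin p)) : Prop :=
  ∃ (s : List (Equiv.Perm (Fin p))) (τ : Equiv.Perm (Fin p)),
    s.head? = some π ∧ s.getLast? = some τ ∧ WeaklyDecreasingSeq C s ∧
    (minimalIMAP C τ).numArrows < (minimalIMAP C π).numArrows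

/-- The TSP assumption of `C` with respect to `G`. -/
def TSP (C : Set (CIRel p)) (G : DAG p) : Prop :=
  CIof G ⊆ C ∧
  ∀ π : Equiv.Perm (Fin p), ¬ EscapesByCoveredReversals C π →
    MarkovEquiv (minimalIMAP C π) G

/-- The SMR assumption of `C` with respect to `G`. -/
def SMR (C : Set (CIRel p)) (G : DAG p) : Prop :=
  CIof G ⊆ C ∧
  ∀ H : DAG p, CIof H ⊆ C → ¬ MarkovEquiv H G → G.numArrows < H.numArrows

end GSP

namespace GSP

variable {p : ℕ}

lemma DAG.not_arrow_self (G : DAG p) (a : Fin p) : ¬ G.Arrow a a := fun h =>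
  G.acyclic a (Relation.TransGen.single h)

lemma DAG.not_arrow_both (G : DAG p) {a b : Fin p} (h1 : G.Arrow a b) (h2 : G.Arrow b a) :
    False :=
  G.acyclic a ((Relation.TransGen.single h1).tail h2)

lemma DAG.Adj.ne {G : DAG p} {a b : Fin p} (h : G.Adj a b) : a ≠ b := by
  rintro rfl
  rcases h with h | h <;> exact G.not_arrow_self a h

lemma DAG.Adj.symm' {G : DAG p} {a b : Fin p} (h : G.Adj a b) : G.Adj b a := Or.symm h

lemma mem_condSet {π : Equiv.Perm (Fin p)} {a b k : Fin p} :
    k ∈ condSet π a b ↔ k ≠ b ∧ k ≠ a ∧ π.symm k ≤ π.symm b := by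
  simp [condSet, Finset.mem_erase, Finset.mem_filter]

lemma desc_pos_le {G : DAG p} {π : Equiv.Perm (Fin p)} (hlin : IsLinExt G π)
    {a d : Fin p} (h : G.Desc a d) : π.symm a ≤ π.symm d := by
  induction h with
  | refl => exact le_refl _
  | tail _ hstep ih => exact ih.trans (le_of_lt (hlin _ _ hstep))

lemma dconn_of_adj {G : DAG p} {a b : Fin p} (h : G.Adj a b) (S : Finset (Fin p)) :
    G.DConn a b S := by
  refine ⟨[a, b], rfl, rfl, ?_, ?_⟩
  · exact List.IsChain.cons_cons h (List.IsChain.singleton b)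
  · intro m h1 h2
    have : m + 1 < 2 := by simpa using h2
    omega

/-- The key d-separation lemma (ordered Markov property): in a DAG `G` with
linear extension `π`, non-adjacent nodes `a, b` with `a` earlier than `b` are
d-separated given all nodes up to `b` other than `a, b`. -/
lemma dsep_condSet {G : DAG p} {π : Equiv.Perm (Fin p)} (hlin : IsLinExt G π)
    {a b : Fin p} (hab : π.symm a < π.symm b) (hnadj : ¬ G.Adj a b) :
    G.DSep a b (condSet π a b) := by
  rintro ⟨l, hhead, hlast, hchain, hcond⟩
  have hne : l ≠ [] := by rintro rfl; simp at hhead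
  have hlen : 0 < l.length := List.length_pos_iff.2 hne
  set x : ℕ → Fin p := fun i => l.getD i a with hxdef
  have hx : ∀ (i : ℕ) (h : i < l.length), x i = l.get ⟨i, h⟩ := by
    intro i hi
    have h := List.getD_eq_getElem l a hi
    simpa [hxdef, List.get_eq_getElem] using h
  have hx0 : x 0 = a := by
    rw [List.head?_eq_getElem? (l := l), List.getElem?_eq_getElem hlen] at hhead
    rw [hx 0 hlen]
    exact Option.some.inj hhead
  have hlast' : l.length - 1 < l.length := by omega
  have hxn : x (l.length - 1) = b := by
    rw [List.getLast?_eq_getElem? (l := l), List.getElem?_eq_getElem hlast'] at hlast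
    rw [hx _ hlast']
    exact Option.some.inj hlast
  have hAdj : ∀ i, i + 1 < l.length → G.Adj (x i) (x (i + 1)) := by
    intro i hi
    have h := List.isChain_iff_getElem.1 hchain i (by omega)
    rw [hx i (by omega), hx (i + 1) hi]
    exact h
  have hcx : ∀ m, 1 ≤ m → m + 1 < l.length →
      (G.Collider (x (m - 1)) (x m) (x (m + 1)) →
        ∃ d ∈ condSet π a b, G.Desc (x m) d) ∧
      (¬ G.Collider (x (m - 1)) (x m) (x (m + 1)) → x m ∉ condSet π a b) := by
    intro m h1 h2
    have h := hcond m h1 h2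
    rw [hx (m - 1) (by omega), hx m (by omega), hx (m + 1) h2]
    exact h
  -- Step A: internal colliders have position strictly below that of `b`.
  have hcolpos : ∀ m, 1 ≤ m → m + 1 < l.length →
      G.Collider (x (m - 1)) (x m) (x (m + 1)) → π.symm (x m) < π.symm b := by
    intro m h1 h2 hcol
    obtain ⟨d, hd, hdesc⟩ := (hcx m h1 h2).1 hcol
    obtain ⟨hdb, hda, hdle⟩ := mem_condSet.1 hd
    have h3 : π.symm (x m) ≤ π.symm d := desc_pos_le hlin hdesc
    have h4 : π.symm d < π.symm b :=
      lt_of_le_of_ne hdle fun hh => hdb (π.symm.injective hh)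
    exact lt_of_le_of_lt h3 h4
  -- Step B: every node on the walk has position at most that of `b`.
  have hmax : ∀ i, i < l.length → π.symm (x i) ≤ π.symm b := by
    obtain ⟨i₀, hi₀mem, hi₀⟩ := Finset.exists_max_image (Finset.range l.length)
      (fun i => π.symm (x i)) ⟨0, Finset.mem_range.2 hlen⟩
    rw [Finset.mem_range] at hi₀mem
    have key : π.symm (x i₀) ≤ π.symm b := by
      by_contra hgt
      push_neg at hgt
      have hi0ne0 : i₀ ≠ 0 := by
        rintro rfl; rw [hx0] at hgt; exact lt_asymm hab hgt
      have hi0nelast : i₀ ≠ l.length - 1 := by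
        rintro h; rw [h, hxn] at hgt; exact lt_irrefl _ hgt
      have h1 : 1 ≤ i₀ := by omega
      have h2 : i₀ + 1 < l.length := by omega
      have hcontra : ∀ j, j < l.length → G.Arrow (x i₀) (x j) → False := by
        intro j hj harr
        have hlt := hlin _ _ harr
        have hle := hi₀ j (Finset.mem_range.2 hj)
        exact absurd hle (not_le.2 hlt)
      by_cases hcol : G.Collider (x (i₀ - 1)) (x i₀) (x (i₀ + 1))
      · exact absurd (hcolpos i₀ h1 h2 hcol) (lt_asymm hgt)
      · have ha1 : G.Adj (x (i₀ - 1)) (x i₀) := by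
          have h := hAdj (i₀ - 1) (by omega)
          rwa [Nat.sub_add_cancel h1] at h
        have ha2 : G.Adj (x i₀) (x (i₀ + 1)) := hAdj i₀ h2
        rcases ha1 with h1a | h1a
        · rcases ha2 with h2a | h2a
          · exact hcontra (i₀ + 1) h2 h2a
          · exact hcol ⟨h1a, h2a⟩
        · exact hcontra (i₀ - 1) (by omega) h1a
    intro i hi
    exact le_trans (hi₀ i (Finset.mem_range.2 hi)) key
  -- Step C: take the last occurrence of `a` on the walk.
  have hKne : ((Finset.range l.length).filter (fun i => x i = a)).Nonempty :=
    ⟨0, Finset.mem_filter.2 ⟨Finset.mem_range.2 hlen, hx0⟩⟩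
  set k := ((Finset.range l.length).filter (fun i => x i = a)).max' hKne with hkdef
  have hkmem : k ∈ (Finset.range l.length).filter (fun i => x i = a) :=
    Finset.max'_mem _ hKne
  have hklt : k < l.length := Finset.mem_range.1 (Finset.mem_filter.1 hkmem).1
  have hxk : x k = a := (Finset.mem_filter.1 hkmem).2
  have hkmax : ∀ i, i < l.length → x i = a → i ≤ k := fun i h1 h2 =>
    Finset.le_max' _ i (Finset.mem_filter.2 ⟨Finset.mem_range.2 h1, h2⟩)
  have hab' : a ≠ b := fun h => by rw [h] at hab; exact lt_irrefl _ hab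
  have hklast : k ≠ l.length - 1 := by
    intro h; rw [h, hxn] at hxk; exact hab' hxk.symm
  have hk1 : k + 1 < l.length := by omega
  -- every node strictly between the last `a` and the final `b` is a collider
  have hallcol : ∀ m, k < m → m + 1 < l.length →
      G.Collider (x (m - 1)) (x m) (x (m + 1)) := by
    intro m hkm hm1
    by_contra hncol
    have h1m : 1 ≤ m := by omega
    have hns := (hcx m h1m hm1).2 hncol
    rw [mem_condSet] at hns
    push_neg at hns
    by_cases hb : x m = b
    · have ha1 : G.Adj (x (m - 1)) (x m) := by
        have h := hAdj (m - 1) (by omega)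
        rwa [Nat.sub_add_cancel h1m] at h
      have ha2 : G.Adj (x m) (x (m + 1)) := hAdj m hm1
      have hout : G.Arrow (x m) (x (m - 1)) ∨ G.Arrow (x m) (x (m + 1)) := by
        rcases ha1 with h | h
        · rcases ha2 with h' | h'
          · exact Or.inr h'
          · exact absurd ⟨h, h'⟩ hncol
        · exact Or.inl h
      rcases hout with h | h
      · have hlt := hlin _ _ h
        rw [hb] at hlt
        exact absurd (hmax (m - 1) (by omega)) (not_le.2 hlt)
      · have hlt := hlin _ _ h
        rw [hb] at hlt
        exact absurd (hmax (m + 1) hm1) (not_le.2 hlt)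
    · by_cases ha' : x m = a
      · have := hkmax m (by omega) ha'; omega
      · exact absurd (hmax m (by omega)) (not_le.2 (hns hb ha'))
  rcases (show k + 1 = l.length - 1 ∨ k + 2 = l.length - 1 ∨ k + 2 < l.length - 1
      by omega) with hcase | hcase | hcase
  · -- `a` and `b` adjacent: contradiction
    have h := hAdj k hk1
    rw [hxk, hcase, hxn] at h
    exact hnadj h
  · -- exactly one internal node after the last `a`: a collider pointed to by `b`
    have hm1 : (k + 1) + 1 < l.length := by omega
    have hcol := hallcol (k + 1) (by omega) hm1
    have harr : G.Arrow (x (k + 2)) (x (k + 1)) := hcol.2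
    rw [show k + 2 = l.length - 1 from hcase, hxn] at harr
    have hlt := hlin _ _ harr
    have hlt2 := hcolpos (k + 1) (by omega) hm1 hcol
    exact lt_asymm hlt hlt2
  · -- two consecutive internal colliders: contradiction with acyclicity
    have hcol1 := hallcol (k + 1) (by omega) (by omega)
    have hcol2 := hallcol (k + 2) (by omega) (by omega)
    exact G.not_arrow_both hcol2.1 hcol1.2

/-- Every DAG admits a linear extension (topological order). -/
lemma exists_linExt (G : DAG p) : ∃ π : Equiv.Perm (Fin p), IsLinExt G π := by
  have hacyc : ∀ a b : Fin p, Relation.ReflTransGen G.Arrow a b →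
      Relation.ReflTransGen G.Arrow b a → a = b := by
    intro a b hab hba
    rcases Relation.reflTransGen_iff_eq_or_transGen.1 hab with h | h
    · exact h.symm
    · exact absurd (Relation.TransGen.trans_left h hba) (G.acyclic a)
  letI : IsPartialOrder (Fin p) (Relation.ReflTransGen G.Arrow) :=
    { refl := fun _ => Relation.ReflTransGen.refl
      trans := fun _ _ _ hab hbc => hab.trans hbc
      antisymm := hacyc }
  obtain ⟨s, hs, hsub⟩ := extend_partialOrder (Relation.ReflTransGen G.Arrow)
  haveI h1 : IsTotal (Fin p) s := hs.toTotal
  haveI h2 : IsTrans (Fin p) s := hs.toIsPartialOrder.toIsPreorder.toIsTrans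
  haveI h3 : IsAntisymm (Fin p) s := hs.toIsPartialOrder.toAntisymm
  set l := Finset.univ.sort s with hl
  have hlen : l.length = p := by
    rw [hl, Finset.length_sort, Finset.card_univ, Fintype.card_fin]
  have hnd : l.Nodup := Finset.sort_nodup _ s
  have hsort : l.Pairwise s := Finset.pairwise_sort _ s
  have hinj : Function.Injective l.get := List.nodup_iff_injective_get.1 hnd
  have hfinj : Function.Injective (fun i : Fin p => l.get (Fin.cast hlen.symm i)) := by
    intro i j hij
    have hij' : l.get (Fin.cast hlen.symm i) = l.get (Fin.cast hlen.symm j) := hij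
    have h := hinj hij'
    have hv := congrArg Fin.val h
    exact Fin.ext hv
  set π : Equiv.Perm (Fin p) :=
    Equiv.ofBijective _ (Finite.injective_iff_bijective.1 hfinj) with hπ
  refine ⟨π, ?_⟩
  intro a b hab
  have hsab : s a b := hsub _ _ (Relation.ReflTransGen.single hab)
  have hne : a ≠ b := fun h => G.not_arrow_self a (h ▸ hab)
  have hfa : l.get (Fin.cast hlen.symm (π.symm a)) = a := π.apply_symm_apply a
  have hfb : l.get (Fin.cast hlen.symm (π.symm b)) = b := π.apply_symm_apply b
  rcases lt_trichotomy (π.symm a) (π.symm b) with h | h | h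
  · exact h
  · exact absurd (by rw [← hfa, ← hfb, h]) hne
  · have hcast : Fin.cast hlen.symm (π.symm b) < Fin.cast hlen.symm (π.symm a) := h
    have hsba : s b a := by
      have h5 := hsort.rel_get_of_lt hcast
      rwa [hfa, hfb] at h5
    exact absurd (_root_.antisymm hsab hsba) hne

lemma minimalIMAP_arrow_iff {C : Set (CIRel p)} {π : Equiv.Perm (Fin p)} {x y : Fin p} :
    (minimalIMAP C π).Arrow x y ↔ π.symm x < π.symm y ∧ (x, y, condSet π x y) ∉ C := by
  simp [minimalIMAP, mkDAG, DAG.Arrow]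

lemma ciof_mem_of_nonadj {H : DAG p} {π : Equiv.Perm (Fin p)} (hlin : IsLinExt H π)
    {a b : Fin p} (hab : π.symm a < π.symm b) (hnadj : ¬ H.Adj a b) :
    (a, b, condSet π a b) ∈ CIof H := by
  have hne : a ≠ b := fun h => by rw [h] at hab; exact lt_irrefl _ hab
  refine ⟨hne, ?_, ?_, dsep_condSet hlin hab hnadj⟩
  · simp [mem_condSet]
  · simp [mem_condSet]

lemma minimalIMAP_subset {C : Set (CIRel p)} {H : DAG p} {π : Equiv.Perm (Fin p)}
    (hC : CIof H ⊆ C) (hlin : IsLinExt H π) :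
    (minimalIMAP C π).arrows ⊆ H.arrows := by
  intro e he
  obtain ⟨u, v⟩ := e
  have harr : (minimalIMAP C π).Arrow u v := he
  rw [minimalIMAP_arrow_iff] at harr
  obtain ⟨hlt, hnotC⟩ := harr
  by_contra hne
  have hnadj : ¬ H.Adj u v := by
    rintro (h | h)
    · exact hne h
    · exact absurd (hlin _ _ h) (not_lt.2 hlt.le)
  exact hnotC (hC (ciof_mem_of_nonadj hlin hlt hnadj))

lemma adj_of_markovEquiv {G H : DAG p} (h : MarkovEquiv G H) {a b : Fin p}
    (hadj : G.Adj a b) : H.Adj a b := by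
  by_contra hnadj
  obtain ⟨π, hlin⟩ := exists_linExt H
  have hne : a ≠ b := hadj.ne
  have hne' : π.symm a ≠ π.symm b := fun hh => hne (π.symm.injective hh)
  rcases hne'.lt_or_gt with hlt | hlt
  · have hmem : (a, b, condSet π a b) ∈ CIof H := ciof_mem_of_nonadj hlin hlt hnadj
    rw [show CIof H = CIof G from h.symm] at hmem
    exact hmem.2.2.2 (dconn_of_adj hadj _)
  · have hnadj' : ¬ H.Adj b a := fun hh => hnadj hh.symm'
    have hmem : (b, a, condSet π b a) ∈ CIof H := ciof_mem_of_nonadj hlin hlt hnadj'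
    rw [show CIof H = CIof G from h.symm] at hmem
    exact hmem.2.2.2 (dconn_of_adj hadj.symm' _)

lemma numArrows_eq_of_markovEquiv {G H : DAG p} (h : MarkovEquiv G H) :
    G.numArrows = H.numArrows := by
  have hadj : ∀ a b : Fin p, G.Adj a b ↔ H.Adj a b := fun a b =>
    ⟨adj_of_markovEquiv h, adj_of_markovEquiv (h.symm : MarkovEquiv H G)⟩
  have key : ∀ K : DAG p,
      (Finset.univ.filter fun e : Fin p × Fin p => K.Adj e.1 e.2).card
        = 2 * K.numArrows := by
    intro K
    have hsplit : (Finset.univ.filter fun e : Fin p × Fin p => K.Adj e.1 e.2)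
        = K.arrows ∪ K.arrows.image Prod.swap := by
      ext ⟨u, v⟩
      rw [Finset.mem_filter_univ]
      simp only [Finset.mem_filter, Finset.mem_univ, true_and, Finset.mem_union,
        Finset.mem_image, DAG.Adj, DAG.Arrow]
      constructor
      · rintro (h | h)
        · exact Or.inl h
        · exact Or.inr ⟨(v, u), h, rfl⟩
      · rintro (h | ⟨⟨c, d⟩, hcd, heq⟩)
        · exact Or.inl h
        · cases heq
          exact Or.inr hcd
    have hdisj : Disjoint K.arrows (K.arrows.image Prod.swap) := by
      rw [Finset.disjoint_left]
      rintro ⟨u, v⟩ h1 h2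
      simp only [Finset.mem_image] at h2
      obtain ⟨⟨c, d⟩, hcd, heq⟩ := h2
      cases heq
      exact K.not_arrow_both h1 hcd
    rw [hsplit, Finset.card_union_of_disjoint hdisj,
      Finset.card_image_of_injective _ Prod.swap_injective]
    simp [DAG.numArrows]
    omega
  have hfeq : (Finset.univ.filter fun e : Fin p × Fin p => G.Adj e.1 e.2)
      = (Finset.univ.filter fun e : Fin p × Fin p => H.Adj e.1 e.2) := by
    apply Finset.filter_congr
    intro e _
    simp [hadj e.1 e.2]
  have h1 := key G
  have h2 := key H
  rw [hfeq] at h1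
  omega

lemma DAG.ext_arrows {G H : DAG p} (h : G.arrows = H.arrows) : G = H := by
  cases G; cases H; simp_all

/-- from the hierarchy in Theorem 16: the TSP assumption
implies the SMR assumption: if `C` satisfies TSP w.r.t. a DAG `G`, then
`CI(G) ⊆ C` and `|G| < |H|` for every DAG `H` with `CI(H) ⊆ C` that is not
Markov equivalent to `G`. -/
theorem tsp_implies_smr
    (p : ℕ) (C : Set (CIRel p)) (G : DAG p) (h : TSP C G) :
    SMR C G := by
  obtain ⟨hsub, htsp⟩ := h
  refine ⟨hsub, ?_⟩
  intro H hH hne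
  obtain ⟨π₀, -, hmin⟩ := Finset.exists_min_image (Finset.univ : Finset (Equiv.Perm (Fin p)))
    (fun σ => (minimalIMAP C σ).numArrows) ⟨Equiv.refl _, Finset.mem_univ _⟩
  have hmin' : ∀ σ, (minimalIMAP C π₀).numArrows ≤ (minimalIMAP C σ).numArrows :=
    fun σ => hmin σ (Finset.mem_univ σ)
  have hnoesc : ¬ EscapesByCoveredReversals C π₀ := by
    rintro ⟨s, τ, -, -, -, hlt⟩
    exact absurd (hmin' τ) (not_le.2 hlt)
  have hGeq : (minimalIMAP C π₀).numArrows = G.numArrows :=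
    numArrows_eq_of_markovEquiv (htsp π₀ hnoesc)
  obtain ⟨π, hlin⟩ := exists_linExt H
  have hsubarr := minimalIMAP_subset hH hlin
  have hle1 : (minimalIMAP C π).numArrows ≤ H.numArrows := Finset.card_le_card hsubarr
  by_contra hcon
  push_neg at hcon
  have hmp := hmin' π
  have heq1 : (minimalIMAP C π).numArrows = H.numArrows := by omega
  have hHeq : minimalIMAP C π = H :=
    DAG.ext_arrows (Finset.eq_of_subset_of_card_le hsubarr (le_of_eq heq1.symm))
  have hnoesc2 : ¬ EscapesByCoveredReversals C π := by
    rintro ⟨s, τ, -, -, -, hlt⟩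
    have := hmin' τ
    omega
  have hfinal := htsp π hnoesc2
  rw [hHeq] at hfinal
  exact hne hfinal

end GSP
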